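/- Let X be a finite set of points in a Euclidean space ℝ^m, let t > 0, and suppose X contains r ≥ 2 points x₁, …, x_r that are pairwise at distance greater than t. Then the minimum spanning tree cost M of X satisfies M ≥ r·t/2. -/

import Mathlib

open Finset
open scoped Classical

noncomputable section

/-- `T` is (the edge set of) a spanning tree on the index set `Fin n`. -/
def IsSpanningTree (n : ℕ) (T : Finset (Fin n × Fin n)) : Prop :=
  T.card = n - 1 ∧ (SimpleGraph.fromRel fun i j => (i, j) ∈ T).Connected

/-- Cost of a spanning tree `T`, with edge lengths measured between the points `pts`. -/
def treeCost {m n : ℕ} (pts : Fin n → EuclideanSpace ℝ (Fin m))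
    (T : Finset (Fin n × Fin n)) : ℝ :=
  ∑ e ∈ T, dist (pts e.1) (pts e.2)

/-- Minimum spanning tree cost of the point set `pts`. -/
def mstCost {m n : ℕ} (pts : Fin n → EuclideanSpace ℝ (Fin m)) : ℝ :=
  sInf {c | ∃ T, IsSpanningTree n T ∧ treeCost pts T = c}

/-- Telescoping along a walk: the variation of `F` between the ends is at most the
sum of edge variations. -/
lemma walk_telescope {V : Type*} {G : SimpleGraph V} (F : V → ℝ)
    {u v : V} (w : G.Walk u v) :
    |F u - F v| ≤ (w.edges.map
      (Sym2.lift ⟨fun a b => |F a - F b|, fun _ _ => abs_sub_comm _ _⟩)).sum := by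
  induction w with
  | nil => simp
  | @cons a b c h p ih =>
    rw [SimpleGraph.Walk.edges_cons, List.map_cons, List.sum_cons, Sym2.lift_mk]
    calc |F a - F c| ≤ |F a - F b| + |F b - F c| := abs_sub_le _ _ _
    _ ≤ |F a - F b| + (p.edges.map _).sum := by linarith [ih]

/-- A path spanning tree exists for every `n ≥ 1` (we use it for nonemptiness). -/
lemma exists_spanning_tree (n : ℕ) (hn : 1 ≤ n) :
    ∃ T : Finset (Fin n × Fin n), IsSpanningTree n T := by
  classical
  set emb : Fin (n-1) → Fin n × Fin n :=
    fun i => (⟨i.1, by have := i.2; omega⟩, ⟨i.1 + 1, by have := i.2; omega⟩) with hemb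
  refine ⟨(Finset.univ : Finset (Fin (n-1))).image emb, ?_, ?_⟩
  · rw [Finset.card_image_of_injective _ ?_, Finset.card_univ, Fintype.card_fin]
    intro a b hab
    have : (emb a).1 = (emb b).1 := by rw [hab]
    simpa [hemb, Fin.ext_iff] using this
  · set G := SimpleGraph.fromRel fun i j : Fin n =>
      (i, j) ∈ (Finset.univ : Finset (Fin (n-1))).image emb with hG
    have key : ∀ k (hk : k < n), G.Reachable ⟨0, by omega⟩ ⟨k, hk⟩ := by
      intro k
      induction k with
      | zero => intro hk; rfl
      | succ k ih =>
        intro hk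
        have hk' : k < n := by omega
        refine (ih hk').trans (SimpleGraph.Adj.reachable ?_)
        rw [hG, SimpleGraph.fromRel_adj]
        constructor
        · simp [Fin.ext_iff]
        · left
          refine Finset.mem_image.mpr ⟨⟨k, by omega⟩, Finset.mem_univ _, ?_⟩
          simp [hemb]
    rw [SimpleGraph.connected_iff]
    refine ⟨fun u v => ?_, ⟨⟨0, by omega⟩⟩⟩
    exact (key u.1 u.2).symm.trans (key v.1 v.2)

theorem mst_cost_lower_bound_of_separated {m n r : ℕ}
    (pts : Fin n → EuclideanSpace ℝ (Fin m)) (t : ℝ) (ht : 0 < t)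
    (f : Fin r → Fin n) (hf : Function.Injective f) (hr : 2 ≤ r)
    (hsep : ∀ i j : Fin r, i ≠ j → t < dist (pts (f i)) (pts (f j))) :
    (r : ℝ) * t / 2 ≤ mstCost pts := by
  classical
  have hrn : r ≤ n := by simpa using Fintype.card_le_of_injective f hf
  have hn : 1 ≤ n := by omega
  have hnontriv : Nontrivial (Fin r) := Fin.nontrivial_iff_two_le.mpr hr
  set s : ℝ := t / 2 with hs
  have hspos : 0 < s := by positivity
  -- the potential functions
  set g : Fin r → Fin n → ℝ := fun i v => max (s - dist (pts v) (pts (f i))) 0 with hg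
  have hg_nonneg : ∀ i v, 0 ≤ g i v := fun i v => le_max_right _ _
  have hg_self : ∀ i, g i (f i) = s := by
    intro i; simp [hg, hspos.le]
  have hg_other : ∀ i j, j ≠ i → g i (f j) = 0 := by
    intro i j hij
    have := hsep j i hij
    have h1 : s - dist (pts (f j)) (pts (f i)) ≤ 0 := by
      rw [hs]; linarith
    simp [hg, max_eq_right h1]
  have hg_lip : ∀ i a b, |g i a - g i b| ≤ dist (pts a) (pts b) := by
    intro i a b
    calc |g i a - g i b|
        ≤ |(s - dist (pts a) (pts (f i))) - (s - dist (pts b) (pts (f i)))| :=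
          abs_max_sub_max_le_abs _ _ _
      _ = |dist (pts b) (pts (f i)) - dist (pts a) (pts (f i))| := by ring_nf
      _ ≤ dist (pts b) (pts a) := abs_dist_sub_le _ _ _
      _ = dist (pts a) (pts b) := dist_comm _ _
  have hg_pos : ∀ i v, 0 < g i v → g i v = s - dist (pts v) (pts (f i)) := by
    intro i v h
    have h' : ¬ s - dist (pts v) (pts (f i)) ≤ 0 := by
      intro h'
      have h0 : g i v = 0 := max_eq_right h'
      linarith
    push_neg at h'
    exact max_eq_left h'.le
  have hg_ball : ∀ i v, 0 < g i v → dist (pts v) (pts (f i)) < s := by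
    intro i v h
    have := hg_pos i v h
    nlinarith [hg_nonneg i v]
  have hg_disj : ∀ i j v, 0 < g i v → 0 < g j v → i = j := by
    intro i j v hi hj
    by_contra hij
    have h1 := hg_ball i v hi
    have h2 := hg_ball j v hj
    have h3 := hsep i j hij
    have htri : dist (pts (f i)) (pts (f j)) ≤
        dist (pts (f i)) (pts v) + dist (pts v) (pts (f j)) := dist_triangle _ _ _
    rw [dist_comm (pts (f i)) (pts v)] at htri
    rw [hs] at h1 h2
    linarith
  -- Claim A: per edge, the sum of variations is at most the edge length
  have claimA : ∀ a b : Fin n, ∑ i, |g i a - g i b| ≤ dist (pts a) (pts b) := by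
    intro a b
    by_cases hcase : ∃ i, 0 < g i a ∧ 0 < g i b
    · obtain ⟨i, hia, hib⟩ := hcase
      have hsum : ∑ j, |g j a - g j b| = |g i a - g i b| := by
        refine Finset.sum_eq_single i (fun j _ hji => ?_) (by simp)
        have hja : g j a = 0 :=
          ((hg_nonneg j a).eq_or_lt.resolve_right fun h => hji (hg_disj j i a h hia)).symm
        have hjb : g j b = 0 :=
          ((hg_nonneg j b).eq_or_lt.resolve_right fun h => hji (hg_disj j i b h hib)).symm
        simp [hja, hjb]
      rw [hsum]; exact hg_lip i a b
    · push_neg at hcase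
      have hterm : ∀ i, |g i a - g i b| = g i a + g i b := by
        intro i
        rcases (hg_nonneg i a).eq_or_lt with h | h
        · rw [← h, zero_sub, abs_neg, abs_of_nonneg (hg_nonneg i b), zero_add]
        · have hb0 : g i b = 0 := (hcase i h).antisymm (hg_nonneg i b)
          rw [hb0, sub_zero, abs_of_nonneg (hg_nonneg i a), add_zero]
      rw [Finset.sum_congr rfl fun i _ => hterm i, Finset.sum_add_distrib]
      -- bound the two sums
      by_cases hA : ∃ i, 0 < g i a
      · obtain ⟨i0, hi0⟩ := hA
        have hsa : ∑ i, g i a = g i0 a :=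
          Finset.sum_eq_single i0
            (fun j _ hji => ((hg_nonneg j a).eq_or_lt.resolve_right
              fun h => hji (hg_disj j i0 a h hi0)).symm) (by simp)
        by_cases hB : ∃ j, 0 < g j b
        · obtain ⟨j0, hj0⟩ := hB
          have hsb : ∑ i, g i b = g j0 b :=
            Finset.sum_eq_single j0
              (fun j _ hji => ((hg_nonneg j b).eq_or_lt.resolve_right
                fun h => hji (hg_disj j j0 b h hj0)).symm) (by simp)
          have hne : i0 ≠ j0 := by
            intro hEq; rw [hEq] at hi0; exact absurd hj0 (not_lt.mpr (hcase j0 hi0))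
          have h3 := hsep i0 j0 hne
          have htri : dist (pts (f i0)) (pts (f j0)) ≤
              dist (pts (f i0)) (pts a) + dist (pts a) (pts b) + dist (pts b) (pts (f j0)) :=
            dist_triangle4 _ _ _ _
          have e1 := hg_pos i0 a hi0
          have e2 := hg_pos j0 b hj0
          rw [hsa, hsb, e1, e2, hs]
          rw [dist_comm (pts (f i0)) (pts a)] at htri
          linarith
        · push_neg at hB
          have hsb : ∑ i, g i b = 0 :=
            Finset.sum_eq_zero fun j _ => ((hg_nonneg j b).antisymm (hB j)).symm
          have hb0 : g i0 b = 0 := ((hg_nonneg i0 b).antisymm (hB i0)).symm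
          rw [hsa, hsb, add_zero]
          calc g i0 a = |g i0 a - g i0 b| := by
                rw [hb0, sub_zero, abs_of_nonneg (hg_nonneg i0 a)]
            _ ≤ _ := hg_lip i0 a b
      · push_neg at hA
        have hsa : ∑ i, g i a = 0 :=
          Finset.sum_eq_zero fun j _ => ((hg_nonneg j a).antisymm (hA j)).symm
        rw [hsa, zero_add]
        by_cases hB : ∃ j, 0 < g j b
        · obtain ⟨j0, hj0⟩ := hB
          have hsb : ∑ i, g i b = g j0 b :=
            Finset.sum_eq_single j0
              (fun j _ hji => ((hg_nonneg j b).eq_or_lt.resolve_right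
                fun h => hji (hg_disj j j0 b h hj0)).symm) (by simp)
          have ha0 : g j0 a = 0 := ((hg_nonneg j0 a).antisymm (hA j0)).symm
          rw [hsb]
          calc g j0 b = |g j0 a - g j0 b| := by
                rw [ha0, zero_sub, abs_neg, abs_of_nonneg (hg_nonneg j0 b)]
            _ ≤ _ := hg_lip j0 a b
        · push_neg at hB
          have hsb : ∑ i, g i b = 0 :=
            Finset.sum_eq_zero fun j _ => ((hg_nonneg j b).antisymm (hB j)).symm
          rw [hsb]; exact dist_nonneg
  -- Claim B: per separated point, the tree carries weight at least s
  have claimB : ∀ (T : Finset (Fin n × Fin n)),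
      (SimpleGraph.fromRel fun i j => (i, j) ∈ T).Connected →
      ∀ i : Fin r, s ≤ ∑ e ∈ T, |g i e.1 - g i e.2| := by
    intro T hconn i
    set G := SimpleGraph.fromRel fun i j : Fin n => (i, j) ∈ T with hG
    obtain ⟨j, hj⟩ := exists_ne i
    obtain ⟨w⟩ := hconn.preconnected (f i) (f j)
    set p : G.Walk (f i) (f j) := (w.toPath : G.Path (f i) (f j)).val with hp
    have hnodup : p.edges.Nodup := (w.toPath).prop.isTrail.edges_nodup
    set wSym : Sym2 (Fin n) → ℝ :=
      Sym2.lift ⟨fun a b => |g i a - g i b|, fun _ _ => abs_sub_comm _ _⟩ with hwSym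
    have h1 : s ≤ (p.edges.map wSym).sum := by
      have h2 := walk_telescope (g i) p
      rw [hg_self, hg_other i j hj, sub_zero, abs_of_pos hspos] at h2
      exact h2
    rw [← List.sum_toFinset wSym hnodup] at h1
    set A := p.edges.toFinset with hA
    have hchoice : ∀ ed : Sym2 (Fin n), ∃ e : Fin n × Fin n,
        ed ∈ A → (e ∈ T ∧ Sym2.mk e.1 e.2 = ed) := by
      intro ed
      by_cases hed : ed ∈ A
      · rw [hA, List.mem_toFinset] at hed
        have hedge := p.edges_subset_edgeSet hed
        induction ed using Sym2.ind with
        | _ a b =>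
          rw [SimpleGraph.mem_edgeSet, hG, SimpleGraph.fromRel_adj] at hedge
          rcases hedge.2 with h | h
          · exact ⟨(a, b), fun _ => ⟨h, rfl⟩⟩
          · exact ⟨(b, a), fun _ => ⟨h, Sym2.eq_swap⟩⟩
      · exact ⟨(f i, f i), fun h => absurd h hed⟩
    choose φ hφ using hchoice
    have hsum_eq : ∑ ed ∈ A, wSym ed = ∑ ed ∈ A, |g i (φ ed).1 - g i (φ ed).2| := by
      refine Finset.sum_congr rfl fun ed hed => ?_
      obtain ⟨hT', hmk⟩ := hφ ed hed
      have hlift : ∀ e : Fin n × Fin n, wSym (Sym2.mk e.1 e.2) = |g i e.1 - g i e.2| := by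
        rintro ⟨a, b⟩
        simp [hwSym]
      rw [← hlift (φ ed), hmk]
    have hinj : ∀ x ∈ A, ∀ y ∈ A, φ x = φ y → x = y := by
      intro x hx y hy hxy
      rw [← (hφ x hx).2, ← (hφ y hy).2, hxy]
    have himg : A.image φ ⊆ T := by
      intro e he
      rw [Finset.mem_image] at he
      obtain ⟨ed, hed, rfl⟩ := he
      exact (hφ ed hed).1
    calc s ≤ ∑ ed ∈ A, wSym ed := h1
      _ = ∑ e ∈ A.image φ, |g i e.1 - g i e.2| := by rw [Finset.sum_image hinj, hsum_eq]
      _ ≤ ∑ e ∈ T, |g i e.1 - g i e.2| :=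
          Finset.sum_le_sum_of_subset_of_nonneg himg fun _ _ _ => abs_nonneg _
  -- assemble
  rw [mstCost]
  refine le_csInf ?_ ?_
  · obtain ⟨T0, hT0⟩ := exists_spanning_tree n hn
    exact ⟨treeCost pts T0, T0, hT0, rfl⟩
  · rintro c ⟨T, hT, rfl⟩
    have hmain : (r : ℝ) * s ≤ treeCost pts T := by
      calc (r : ℝ) * s = ∑ _i : Fin r, s := by
            rw [Finset.sum_const, Finset.card_univ, Fintype.card_fin, nsmul_eq_mul]
        _ ≤ ∑ i : Fin r, ∑ e ∈ T, |g i e.1 - g i e.2| :=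
            Finset.sum_le_sum fun i _ => claimB T hT.2 i
        _ = ∑ e ∈ T, ∑ i : Fin r, |g i e.1 - g i e.2| := Finset.sum_comm
        _ ≤ ∑ e ∈ T, dist (pts e.1) (pts e.2) :=
            Finset.sum_le_sum fun e _ => claimA e.1 e.2
        _ = treeCost pts T := rfl
    rw [hs] at hmain
    linarith
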